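/- Let θ ∈ (0,1), μ ∈ (θ,1], c, C > 0, and λ_k = c·k for k ∈ ℕ. Then for every α > 0, the sum ∑_{k=1}^∞ (k^{−μ}/(c k + α))·k^θ is bounded above by C'·α^{θ−μ} where C' = C·∫₀^∞ τ^{θ−μ}/(cτ+1) dτ < ∞. -/

import Mathlib

open MeasureTheory

/-- Decay of the series ∑ k^{-μ} k^θ / (ck+α) like α^{θ-μ}, via comparison with
the finite integral ∫₀^∞ τ^{θ-μ}/(cτ+1) dτ. -/
theorem series_decay_alpha (θ mu c : ℝ) (hθ : θ ∈ Set.Ioo (0:ℝ) 1)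
    (hmu : mu ∈ Set.Ioc θ 1) (hc : 0 < c) :
    IntegrableOn (fun τ : ℝ => τ ^ (θ - mu) / (c * τ + 1)) (Set.Ioi 0) ∧
    ∃ C > (0:ℝ), ∀ α > (0:ℝ),
      ∑' k : ℕ+, ((k : ℝ) ^ (-mu) / (c * k + α)) * (k : ℝ) ^ θ ≤
        (C * ∫ τ in Set.Ioi (0:ℝ), τ ^ (θ - mu) / (c * τ + 1)) * α ^ (θ - mu) := by
  obtain ⟨hθ0, hθ1⟩ := hθ
  obtain ⟨hθμ, hμ1⟩ := hmu
  have hexp0 : -1 < θ - mu := by linarith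
  have hexp1 : θ - mu - 1 < -1 := by linarith
  have hexpneg : θ - mu < 0 := by linarith
  -- general integrability
  have hInt : ∀ α : ℝ, 0 < α →
      IntegrableOn (fun t : ℝ => t ^ (θ - mu) / (c * t + α)) (Set.Ioi 0) := by
    intro α hα
    have hmeas : AEStronglyMeasurable (fun t : ℝ => t ^ (θ - mu) / (c * t + α))
        (volume.restrict (Set.Ioi (0:ℝ))) := by
      apply ContinuousOn.aestronglyMeasurable _ measurableSet_Ioi
      apply ContinuousOn.div
      · exact ContinuousOn.rpow_const continuousOn_id (fun t ht => Or.inl (ne_of_gt ht))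
      · exact Continuous.continuousOn (by continuity)
      · intro t ht
        have : (0:ℝ) < t := ht
        positivity
    have hsplit : Set.Ioc (0:ℝ) 1 ∪ Set.Ioi (1:ℝ) = Set.Ioi (0:ℝ) :=
      Set.Ioc_union_Ioi_eq_Ioi zero_le_one
    rw [← hsplit]
    apply IntegrableOn.union
    · -- on (0,1]
      have h1 : IntegrableOn (fun t : ℝ => t ^ (θ - mu) * α⁻¹) (Set.Ioc (0:ℝ) 1) := by
        apply Integrable.mul_const
        have := (intervalIntegral.intervalIntegrable_rpow' (a := 0) (b := 1) hexp0)
        rwa [intervalIntegrable_iff_integrableOn_Ioc_of_le zero_le_one] at this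
      apply Integrable.mono h1
      · exact hmeas.mono_measure (Measure.restrict_mono (by
          intro x hx; exact hx.1) le_rfl)
      · rw [ae_restrict_iff' measurableSet_Ioc]
        filter_upwards with t ht
        have ht0 : (0:ℝ) < t := ht.1
        have hnum : (0:ℝ) ≤ t ^ (θ - mu) := Real.rpow_nonneg ht0.le _
        have hden : (0:ℝ) < c * t + α := by positivity
        rw [Real.norm_eq_abs, Real.norm_eq_abs, abs_of_nonneg (by positivity),
          abs_of_nonneg (by positivity)]
        rw [← div_eq_mul_inv]
        gcongr
        nlinarith
    · -- on (1,∞)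
      have h1 : IntegrableOn (fun t : ℝ => c⁻¹ * t ^ (θ - mu - 1)) (Set.Ioi (1:ℝ)) :=
        (integrableOn_Ioi_rpow_of_lt hexp1 one_pos).const_mul _
      apply Integrable.mono h1
      · exact hmeas.mono_measure (Measure.restrict_mono (by
          intro x hx; exact lt_trans one_pos (Set.mem_Ioi.mp hx)) le_rfl)
      · rw [ae_restrict_iff' measurableSet_Ioi]
        filter_upwards with t ht
        have ht1 : (1:ℝ) < t := ht
        have ht0 : (0:ℝ) < t := lt_trans one_pos ht1
        have hnum : (0:ℝ) ≤ t ^ (θ - mu) := Real.rpow_nonneg ht0.le _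
        have hden : (0:ℝ) < c * t + α := by positivity
        rw [Real.norm_eq_abs, Real.norm_eq_abs, abs_of_nonneg (by positivity),
          abs_of_nonneg (by positivity)]
        have key : t ^ (θ - mu) / (c * t + α) ≤ t ^ (θ - mu) / (c * t) := by
          gcongr <;> nlinarith [mul_pos hc ht0]
        refine key.trans (le_of_eq ?_)
        rw [show θ - mu - 1 = (θ - mu) + (-1) by ring, Real.rpow_add ht0,
          Real.rpow_neg ht0.le, Real.rpow_one]
        field_simp
    -- antitonicity
  have hant : ∀ α : ℝ, 0 < α → ∀ x y : ℝ, 0 < x → x ≤ y →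
      y ^ (θ - mu) / (c * y + α) ≤ x ^ (θ - mu) / (c * x + α) := by
    intro α hα x y hx hxy
    have h1 : y ^ (θ - mu) ≤ x ^ (θ - mu) :=
      Real.rpow_le_rpow_of_nonpos hx hxy hexpneg.le
    have h2 : (0:ℝ) < c * x + α := by positivity
    apply div_le_div₀ (Real.rpow_nonneg (hx.le) _) h1 h2 (by nlinarith)
  refine ⟨by simpa using hInt 1 one_pos, 1, one_pos, ?_⟩
  intro α hα
  set F : ℝ → ℝ := fun t => t ^ (θ - mu) / (c * t + α) with hF
  set g : ℝ → ℝ := fun t => t ^ (θ - mu) / (c * t + 1) with hg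
  set I : ℝ := ∫ τ in Set.Ioi (0:ℝ), g τ with hI
  have hIα : IntegrableOn F (Set.Ioi 0) := hInt α hα
  -- substitution: ∫ F = α^(θ-mu) * I
  have hsub : (∫ t in Set.Ioi (0:ℝ), F t) = α ^ (θ - mu) * I := by
    have h1 := MeasureTheory.integral_comp_mul_left_Ioi F 0 hα
    rw [mul_zero] at h1
    have h2 : Set.EqOn (fun x => F (α * x)) (fun x => α ^ (θ - mu - 1) * g x)
        (Set.Ioi (0:ℝ)) := by
      intro x hx
      have hx0 : (0:ℝ) < x := hx
      simp only [hF, hg]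
      rw [Real.mul_rpow hα.le hx0.le, show c * (α * x) + α = α * (c * x + 1) by ring,
        show θ - mu - 1 = (θ - mu) + (-1) by ring, Real.rpow_add hα,
        Real.rpow_neg hα.le, Real.rpow_one]
      have hcx : (0:ℝ) < c * x + 1 := by positivity
      field_simp
    rw [setIntegral_congr_fun measurableSet_Ioi h2, integral_const_mul] at h1
    have := h1
    rw [smul_eq_mul] at this
    have hαne : α ≠ 0 := ne_of_gt hα
    have hαpow : α * α ^ (θ - mu - 1) = α ^ (θ - mu) := by
      rw [show θ - mu - 1 = (θ - mu) + (-1) by ring, Real.rpow_add hα,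
        Real.rpow_neg hα.le, Real.rpow_one]
      field_simp
    calc (∫ t in Set.Ioi (0:ℝ), F t) = α * (α⁻¹ * ∫ t in Set.Ioi (0:ℝ), F t) := by
          field_simp
      _ = α * (α ^ (θ - mu - 1) * I) := by rw [← this]
      _ = α ^ (θ - mu) * I := by rw [← mul_assoc, hαpow]
  -- the series terms
  set f : ℕ → ℝ := fun n => F ((n:ℝ) + 1) with hf
  have hfnonneg : ∀ n, 0 ≤ f n := by
    intro n
    have : (0:ℝ) < (n:ℝ) + 1 := by positivity
    simp only [hf, hF]
    positivity
  -- partial sums bounded by the integral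
  have hinterval : ∀ i : ℕ, IntervalIntegrable F volume (i:ℝ) ((i:ℝ)+1) := by
    intro i
    rw [intervalIntegrable_iff_integrableOn_Ioc_of_le (by linarith)]
    apply hIα.mono_set
    intro x hx
    exact lt_of_le_of_lt (by positivity) hx.1
  have step1 : ∀ i : ℕ, f i ≤ ∫ x in (i:ℝ)..((i:ℝ)+1), F x := by
    intro i
    rw [intervalIntegral.integral_of_le (by linarith)]
    have hvol : (volume (Set.Ioc (i:ℝ) ((i:ℝ)+1))).toReal = 1 := by
      rw [Real.volume_Ioc]
      norm_num
    have hconst : (∫ _ in Set.Ioc (i:ℝ) ((i:ℝ)+1), f i) = f i := by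
      rw [setIntegral_const, measureReal_def, hvol, one_smul]
    rw [← hconst]
    apply setIntegral_mono_on ((integrableOn_const_iff (C := f i)).mpr (Or.inr (by
      rw [Real.volume_Ioc]; exact ENNReal.ofReal_lt_top)))
      (by
        apply hIα.mono_set
        intro x hx
        exact lt_of_le_of_lt (by positivity) hx.1)
      measurableSet_Ioc
    intro x hx
    have hx0 : (0:ℝ) < x := lt_of_le_of_lt (by positivity) hx.1
    exact hant α hα x ((i:ℝ)+1) hx0 hx.2
  have step2 : ∀ n : ℕ, ∑ i ∈ Finset.range n, (∫ x in (i:ℝ)..((i:ℝ)+1), F x)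
      = ∫ x in (0:ℝ)..(n:ℝ), F x := by
    intro n
    have := intervalIntegral.sum_integral_adjacent_intervals
      (a := fun i : ℕ => (i:ℝ)) (n := n) (f := F) (μ := volume)
      (fun k _ => by
        have := hinterval k
        push_cast
        convert this using 2 <;> push_cast <;> ring)
    simpa using this
  have step3 : ∀ n : ℕ, (∫ x in (0:ℝ)..(n:ℝ), F x) ≤ ∫ t in Set.Ioi (0:ℝ), F t := by
    intro n
    rw [intervalIntegral.integral_of_le (by positivity)]
    apply setIntegral_mono_set hIα
    · filter_upwards [ae_restrict_mem measurableSet_Ioi] with t ht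
      have : (0:ℝ) < t := ht
      simp only [hF, Pi.zero_apply]
      positivity
    · exact Filter.Eventually.of_forall (fun x hx => hx.1)
  have partial_le : ∀ n : ℕ, ∑ i ∈ Finset.range n, f i ≤ ∫ t in Set.Ioi (0:ℝ), F t := by
    intro n
    calc ∑ i ∈ Finset.range n, f i ≤ ∑ i ∈ Finset.range n, ∫ x in (i:ℝ)..((i:ℝ)+1), F x :=
          Finset.sum_le_sum (fun i _ => step1 i)
      _ = ∫ x in (0:ℝ)..(n:ℝ), F x := step2 n
      _ ≤ ∫ t in Set.Ioi (0:ℝ), F t := step3 n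
  have htsum_f : (∑' n : ℕ, f n) ≤ ∫ t in Set.Ioi (0:ℝ), F t :=
    Real.tsum_le_of_sum_range_le hfnonneg partial_le
  -- identify the ℕ+ series with the ℕ series
  have hident : (∑' k : ℕ+, ((k : ℝ) ^ (-mu) / (c * k + α)) * (k : ℝ) ^ θ) = ∑' n : ℕ, f n := by
    rw [← Equiv.tsum_eq Equiv.pnatEquivNat.symm
      (fun k : ℕ+ => ((k : ℝ) ^ (-mu) / (c * k + α)) * (k : ℝ) ^ θ)]
    apply tsum_congr
    intro n
    have hcoe : ((Equiv.pnatEquivNat.symm n : ℕ+) : ℝ) = (n:ℝ) + 1 := by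
      simp [Equiv.pnatEquivNat, Nat.succPNat]
    rw [hcoe]
    have hpos : (0:ℝ) < (n:ℝ) + 1 := by positivity
    simp only [hf, hF]
    rw [div_mul_eq_mul_div, ← Real.rpow_add hpos]
    ring_nf
  rw [hident, one_mul, mul_comm I (α ^ (θ - mu)), ← hsub]
  exact htsum_f
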